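/- Let k ∈ ℝ, let m be an integer, and let r_s > 0, z_t, z_s ∈ ℝ be fixed. Then at every r_t > 0 with (r_t, z_t) ≠ (r_s, z_s), the function r_t ↦ g¹_m(r_t, z_t, r_s, z_s) = ∫₀^{2π} (e^{ikρ(φ)}/(4πρ(φ)))·e^{−imφ} dφ is differentiable with derivative ∂g¹_m/∂r_t = (1/(4π)) ∫₀^{2π} ((ikρ(φ)·e^{ikρ(φ)} − e^{ikρ(φ)})·(r_t − r_s cos φ)/ρ(φ)³)·e^{−imφ} dφ. -/

import Mathlib

open Real MeasureTheory

/-- `ρ(φ) = √(r_t² + r_s² − 2 r_t r_s cos φ + (z_t − z_s)²)`. -/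
noncomputable def rho (rt rs zt zs φ : ℝ) : ℝ :=
  Real.sqrt (rt ^ 2 + rs ^ 2 - 2 * rt * rs * Real.cos φ + (zt - zs) ^ 2)

/-- The modal Green's function `g¹_m(r_t, z_t, r_s, z_s)`. -/
noncomputable def g1 (k : ℝ) (m : ℤ) (rt zt rs zs : ℝ) : ℂ :=
  ∫ φ in (0:ℝ)..(2 * Real.pi),
    Complex.exp (Complex.I * (k * rho rt rs zt zs φ)) / (4 * Real.pi * rho rt rs zt zs φ) *
      Complex.exp (-Complex.I * m * φ)

private lemma rho_lower (x rs zt zs φ : ℝ) (hx : 0 ≤ x) (hrs : 0 ≤ rs) :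
    Real.sqrt ((x - rs) ^ 2 + (zt - zs) ^ 2) ≤ rho x rs zt zs φ := by
  apply Real.sqrt_le_sqrt
  nlinarith [mul_nonneg (mul_nonneg hx hrs) (sub_nonneg.2 (Real.cos_le_one φ))]

private lemma rho_cont (x rs zt zs : ℝ) : Continuous (fun φ => rho x rs zt zs φ) := by
  apply Real.continuous_sqrt.comp
  continuity

private lemma hasDerivAt_integrand (k rs zt zs φ : ℝ) (m : ℤ) (x : ℝ)
    (hρ : 0 < rho x rs zt zs φ) :
    HasDerivAt
      (fun y : ℝ => Complex.exp (Complex.I * (k * rho y rs zt zs φ)) /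
          (4 * Real.pi * rho y rs zt zs φ) * Complex.exp (-Complex.I * m * φ))
      ((1 / (4 * (Real.pi : ℂ))) *
        (((Complex.I * (k * rho x rs zt zs φ) *
              Complex.exp (Complex.I * (k * rho x rs zt zs φ)) -
            Complex.exp (Complex.I * (k * rho x rs zt zs φ))) *
          ((x - rs * Real.cos φ) / (rho x rs zt zs φ) ^ 3)) *
        Complex.exp (-Complex.I * m * φ))) x := by
  have hqx : 0 < x ^ 2 + rs ^ 2 - 2 * x * rs * Real.cos φ + (zt - zs) ^ 2 := by
    have := hρ; rw [rho] at this; exact Real.sqrt_pos.1 this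
  have hq : HasDerivAt (fun y : ℝ => y ^ 2 + rs ^ 2 - 2 * y * rs * Real.cos φ + (zt - zs) ^ 2)
      (2 * x - 2 * rs * Real.cos φ) x := by
    have A : HasDerivAt (fun y : ℝ => y ^ 2) (2 * x) x := by
      simpa using hasDerivAt_pow 2 x
    have B : HasDerivAt (fun y : ℝ => 2 * y * rs * Real.cos φ) (2 * rs * Real.cos φ) x := by
      have h := (hasDerivAt_id x).const_mul (2 * rs * Real.cos φ)
      have he : (fun y : ℝ => 2 * y * rs * Real.cos φ)
          = fun y : ℝ => 2 * rs * Real.cos φ * (id y) := by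
        funext y; simp only [id]; ring
      rw [he]
      simpa using h
    exact ((A.add_const (rs ^ 2)).sub B).add_const ((zt - zs) ^ 2)
  have hsq : HasDerivAt (fun y => rho y rs zt zs φ)
      ((x - rs * Real.cos φ) / rho x rs zt zs φ) x := by
    have h := (Real.hasDerivAt_sqrt hqx.ne').comp x hq
    have h2 : (Real.sqrt ∘ fun y : ℝ => y ^ 2 + rs ^ 2 - 2 * y * rs * Real.cos φ + (zt - zs) ^ 2)
        = fun y => rho y rs zt zs φ := by
      funext y; simp [rho, Function.comp]
    rw [h2] at h
    refine h.congr_deriv ?_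
    have hs0 : Real.sqrt (x ^ 2 + rs ^ 2 - 2 * x * rs * Real.cos φ + (zt - zs) ^ 2) ≠ 0 := hρ.ne'
    rw [rho]
    field_simp
  have hρc : HasDerivAt (fun y => ((rho y rs zt zs φ : ℝ) : ℂ))
      (((x - rs * Real.cos φ) / rho x rs zt zs φ : ℝ) : ℂ) x := hsq.ofReal_comp
  have hinner := (hρc.const_mul (k : ℂ)).const_mul Complex.I
  have hexp := hinner.cexp
  have hden := hρc.const_mul (4 * (Real.pi : ℂ))
  have hρne : (rho x rs zt zs φ : ℂ) ≠ 0 := by exact_mod_cast hρ.ne'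
  have hπne : (Real.pi : ℂ) ≠ 0 := by exact_mod_cast Real.pi_ne_zero
  have hden_ne : (4 : ℂ) * (Real.pi : ℂ) * (rho x rs zt zs φ : ℂ) ≠ 0 := by
    exact mul_ne_zero (mul_ne_zero (by norm_num) hπne) hρne
  have hdiv := hexp.div hden hden_ne
  have hfinal := hdiv.mul_const (Complex.exp (-Complex.I * m * φ))
  refine hfinal.congr_deriv ?_
  push_cast
  field_simp

private lemma norm_integrand_deriv_le (k rs zt zs : ℝ) (m : ℤ) (c R : ℝ) (hc : 0 < c)
    (x φ : ℝ) (hρ : c ≤ rho x rs zt zs φ) (hx : |x - rs * Real.cos φ| ≤ R) :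
    ‖(1 / (4 * (Real.pi : ℂ))) *
        (((Complex.I * (k * rho x rs zt zs φ) *
              Complex.exp (Complex.I * (k * rho x rs zt zs φ)) -
            Complex.exp (Complex.I * (k * rho x rs zt zs φ))) *
          ((x - rs * Real.cos φ) / (rho x rs zt zs φ) ^ 3)) *
        Complex.exp (-Complex.I * m * φ))‖
      ≤ (1 / (4 * Real.pi)) * ((|k| / c ^ 2 + 1 / c ^ 3) * R) := by
  set ρ := rho x rs zt zs φ with hρdef
  have hρ0 : 0 < ρ := lt_of_lt_of_le hc hρ
  have hR0 : 0 ≤ R := le_trans (abs_nonneg _) hx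
  have h1 : ‖Complex.exp (Complex.I * (k * (ρ : ℂ)))‖ = 1 := by
    simp [Complex.norm_exp]
  have h2 : ‖Complex.exp (-Complex.I * m * (φ : ℂ))‖ = 1 := by
    simp [Complex.norm_exp]
  have e0 : ‖(1 / (4 * (Real.pi : ℂ)))‖ = 1 / (4 * Real.pi) := by
    rw [norm_div, norm_one, norm_mul]
    simp [abs_of_pos Real.pi_pos]
  rw [norm_mul, norm_mul, e0, h2, mul_one, norm_mul]
  have hd : ((x : ℂ) - rs * Real.cos φ) / (ρ : ℂ) ^ 3
      = (((x - rs * Real.cos φ) / ρ ^ 3 : ℝ) : ℂ) := by push_cast; ring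
  rw [hd, Complex.norm_real, Real.norm_eq_abs]
  have hnA : ‖Complex.I * ((k : ℂ) * (ρ : ℂ))‖ = |k| * ρ := by
    rw [norm_mul, Complex.norm_I, one_mul, norm_mul, Complex.norm_real, Complex.norm_real,
      Real.norm_eq_abs, Real.norm_eq_abs, abs_of_pos hρ0]
  have hnum : ‖Complex.I * ((k : ℂ) * (ρ : ℂ)) * Complex.exp (Complex.I * (k * (ρ : ℂ)))
      - Complex.exp (Complex.I * (k * (ρ : ℂ)))‖ ≤ |k| * ρ + 1 := by
    refine le_trans (norm_sub_le _ _) ?_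
    rw [norm_mul, hnA, h1, mul_one]
  have habs : |(x - rs * Real.cos φ) / ρ ^ 3| = |x - rs * Real.cos φ| / ρ ^ 3 := by
    rw [abs_div, abs_of_pos (show (0:ℝ) < ρ ^ 3 by positivity)]
  have step1 : ‖Complex.I * ((k : ℂ) * (ρ : ℂ)) * Complex.exp (Complex.I * (k * (ρ : ℂ)))
      - Complex.exp (Complex.I * (k * (ρ : ℂ)))‖ * |(x - rs * Real.cos φ) / ρ ^ 3|
      ≤ (|k| * ρ + 1) * (R / ρ ^ 3) := by
    rw [habs]
    apply mul_le_mul hnum _ (by positivity) (by positivity)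
    exact (div_le_div_iff_of_pos_right (show (0:ℝ) < ρ ^ 3 by positivity)).2 hx
  have step2 : (|k| * ρ + 1) * (R / ρ ^ 3) ≤ (|k| / c ^ 2 + 1 / c ^ 3) * R := by
    have heq : (|k| * ρ + 1) * (R / ρ ^ 3) = (|k| / ρ ^ 2 + 1 / ρ ^ 3) * R := by
      field_simp
    rw [heq]
    gcongr
  refine le_trans (mul_le_mul_of_nonneg_left (le_trans step1 step2) (by positivity)) le_rfl

theorem stmt_18 (k : ℝ) (m : ℤ) (rs zt zs : ℝ) (hrs : 0 < rs) :
    ∀ rt : ℝ, 0 < rt → (rt, zt) ≠ (rs, zs) →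
      HasDerivAt (fun x : ℝ => g1 k m x zt rs zs)
        ((1 / (4 * Real.pi)) * ∫ φ in (0:ℝ)..(2 * Real.pi),
          ((Complex.I * (k * rho rt rs zt zs φ) *
                Complex.exp (Complex.I * (k * rho rt rs zt zs φ)) -
              Complex.exp (Complex.I * (k * rho rt rs zt zs φ))) *
            ((rt - rs * Real.cos φ) / (rho rt rs zt zs φ) ^ 3)) *
          Complex.exp (-Complex.I * m * φ)) rt := by
  intro rt hrt hne
  have hne' : rt ≠ rs ∨ zt ≠ zs := by
    by_contra h
    push_neg at h
    exact hne (by rw [h.1, h.2])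
  set c := Real.sqrt ((rt - rs) ^ 2 + (zt - zs) ^ 2) with hcdef
  have hc0 : 0 < c := by
    apply Real.sqrt_pos.2
    rcases hne' with h | h
    · have h2 : 0 < |rt - rs| := abs_pos.2 (sub_ne_zero.2 h)
      nlinarith [sq_nonneg (zt - zs), sq_abs (rt - rs)]
    · have h2 : 0 < |zt - zs| := abs_pos.2 (sub_ne_zero.2 h)
      nlinarith [sq_nonneg (rt - rs), sq_abs (zt - zs)]
  -- an open neighborhood where rho is bounded below
  set S : Set ℝ := {x : ℝ | 0 < x ∧ c / 2 < Real.sqrt ((x - rs) ^ 2 + (zt - zs) ^ 2)} with hSdef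
  have hSopen : IsOpen S := by
    apply IsOpen.inter (isOpen_lt continuous_const continuous_id)
    exact isOpen_lt continuous_const
      (Real.continuous_sqrt.comp (by continuity))
  have hrtS : rt ∈ S := ⟨hrt, by rw [← hcdef]; linarith⟩
  obtain ⟨ε, hε, hball⟩ := Metric.isOpen_iff.1 hSopen rt hrtS
  have hρlow : ∀ x ∈ Metric.ball rt ε, ∀ φ : ℝ, c / 2 ≤ rho x rs zt zs φ := by
    intro x hx φ
    obtain ⟨hx0, hxl⟩ := hball hx
    exact le_trans hxl.le (rho_lower x rs zt zs φ hx0.le hrs.le)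
  have hρpos : ∀ x ∈ Metric.ball rt ε, ∀ φ : ℝ, 0 < rho x rs zt zs φ := by
    intro x hx φ
    exact lt_of_lt_of_le (by positivity) (hρlow x hx φ)
  have hxbound : ∀ x ∈ Metric.ball rt ε, ∀ φ : ℝ,
      |x - rs * Real.cos φ| ≤ rt + ε + rs := by
    intro x hx φ
    have h1 : |x - rt| < ε := by
      rw [← Real.dist_eq]; exact Metric.mem_ball.1 hx
    have h2 : |Real.cos φ| ≤ 1 := Real.abs_cos_le_one φ
    have h3 : |rs * Real.cos φ| ≤ rs := by
      rw [abs_mul, abs_of_pos hrs]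
      nlinarith
    calc |x - rs * Real.cos φ| ≤ |x| + |rs * Real.cos φ| := abs_sub _ _
      _ ≤ (|rt| + ε) + rs := by
          have : |x| ≤ |rt| + ε := by
            have := abs_sub_abs_le_abs_sub x rt
            linarith
          linarith
      _ = rt + ε + rs := by rw [abs_of_pos hrt]
  -- continuity of the integrand
  have hFcont : ∀ x ∈ Metric.ball rt ε, Continuous (fun φ : ℝ =>
      Complex.exp (Complex.I * (k * rho x rs zt zs φ)) / (4 * Real.pi * rho x rs zt zs φ) *
        Complex.exp (-Complex.I * m * φ)) := by
    intro x hx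
    have hρc : Continuous (fun φ : ℝ => ((rho x rs zt zs φ : ℝ) : ℂ)) :=
      Complex.continuous_ofReal.comp (rho_cont x rs zt zs)
    apply Continuous.mul
    · apply Continuous.div
      · exact Complex.continuous_exp.comp (continuous_const.mul (continuous_const.mul hρc))
      · exact continuous_const.mul hρc
      · intro φ
        have := hρpos x hx φ
        have hρne : (rho x rs zt zs φ : ℂ) ≠ 0 := by exact_mod_cast this.ne'
        have hπne : (Real.pi : ℂ) ≠ 0 := by exact_mod_cast Real.pi_ne_zero
        exact mul_ne_zero (mul_ne_zero (by norm_num) hπne) hρne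
    · exact Complex.continuous_exp.comp (by continuity)
  have hF'cont : Continuous (fun φ : ℝ =>
      (1 / (4 * (Real.pi : ℂ))) *
        (((Complex.I * (k * rho rt rs zt zs φ) *
              Complex.exp (Complex.I * (k * rho rt rs zt zs φ)) -
            Complex.exp (Complex.I * (k * rho rt rs zt zs φ))) *
          ((rt - rs * Real.cos φ) / (rho rt rs zt zs φ) ^ 3)) *
        Complex.exp (-Complex.I * m * φ))) := by
    have hρc : Continuous (fun φ : ℝ => ((rho rt rs zt zs φ : ℝ) : ℂ)) :=
      Complex.continuous_ofReal.comp (rho_cont rt rs zt zs)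
    have hexpc : Continuous (fun φ : ℝ => Complex.exp (Complex.I * (k * rho rt rs zt zs φ))) :=
      Complex.continuous_exp.comp (continuous_const.mul (continuous_const.mul hρc))
    apply continuous_const.mul
    apply Continuous.mul
    · apply Continuous.mul
      · exact ((continuous_const.mul (continuous_const.mul hρc)).mul hexpc).sub hexpc
      · apply Continuous.div
        · continuity
        · exact hρc.pow 3
        · intro φ
          have h0 := hρpos rt (Metric.mem_ball_self hε) φ
          have h1 : (rho rt rs zt zs φ : ℂ) ≠ 0 := by exact_mod_cast h0.ne'
          exact pow_ne_zero 3 h1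
    · exact Complex.continuous_exp.comp (by continuity)
  -- apply differentiation under the integral sign
  have main := intervalIntegral.hasDerivAt_integral_of_dominated_loc_of_deriv_le
    (μ := volume) (a := (0:ℝ)) (b := 2 * Real.pi) (x₀ := rt)
    (F := fun x φ =>
      Complex.exp (Complex.I * (k * rho x rs zt zs φ)) / (4 * Real.pi * rho x rs zt zs φ) *
        Complex.exp (-Complex.I * m * φ))
    (F' := fun x φ =>
      (1 / (4 * (Real.pi : ℂ))) *
        (((Complex.I * (k * rho x rs zt zs φ) *
              Complex.exp (Complex.I * (k * rho x rs zt zs φ)) -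
            Complex.exp (Complex.I * (k * rho x rs zt zs φ))) *
          ((x - rs * Real.cos φ) / (rho x rs zt zs φ) ^ 3)) *
        Complex.exp (-Complex.I * m * φ)))
    (bound := fun _ => (1 / (4 * Real.pi)) * ((|k| / (c / 2) ^ 2 + 1 / (c / 2) ^ 3) * (rt + ε + rs)))
    (Metric.ball_mem_nhds rt hε)
    (by
      filter_upwards [Metric.ball_mem_nhds rt hε] with x hx
      exact (hFcont x hx).aestronglyMeasurable)
    ((hFcont rt (Metric.mem_ball_self hε)).intervalIntegrable 0 (2 * Real.pi))
    hF'cont.aestronglyMeasurable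
    (by
      filter_upwards with φ _ x hx
      exact norm_integrand_deriv_le k rs zt zs m (c / 2) (rt + ε + rs) (by positivity) x φ
        (hρlow x hx φ) (hxbound x hx φ))
    (intervalIntegrable_const)
    (by
      filter_upwards with φ _ x hx
      exact hasDerivAt_integrand k rs zt zs φ m x (hρpos x hx φ))
  have hD := main.2
  rw [intervalIntegral.integral_const_mul] at hD
  exact hD
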